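/- Let n ≥ 1 and b ∈ (-1, -(n-2)/(n+2)]. Let r be analytic on 𝔻 with r' never zero and Re(z r''(z)/r'(z)) > -(n+2)/2 on 𝔻, and define s by s'(z) = e^{iθ} z^n r'(z) for a fixed θ ∈ ℝ. Then the function ŵ(z) = (2b s'(z) + (1+b) z s''(z)) / (2 r'(z) + (1+b) z r''(z)) satisfies |ŵ(z)| ≤ |z|^n < 1 for all z ∈ 𝔻. -/

import Mathlib

open Metric Complex

lemma key_ineq (A c : ℝ) (u : ℂ) (h : A^2 - 4 ≤ (4 - 2*A) * (c * u.re)) :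
    ‖(A:ℂ) + c*u‖ ≤ ‖(2:ℂ) + c*u‖ := by
  rw [Complex.norm_def, Complex.norm_def]
  apply Real.sqrt_le_sqrt
  simp only [Complex.normSq_apply, Complex.add_re, Complex.add_im, Complex.ofReal_re,
    Complex.ofReal_im, Complex.mul_re, Complex.mul_im]
  norm_num
  nlinarith [h]

open Metric Complex in
theorem stmt_9 (n : ℕ) (hn : 1 ≤ n) (b : ℝ)
    (hb₁ : -1 < b) (hb₂ : b ≤ -(((n : ℝ) - 2) / ((n : ℝ) + 2))) (θ : ℝ)
    (r' r'' s'' : ℂ → ℂ)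
    (hr'' : ∀ z ∈ ball (0 : ℂ) 1, HasDerivAt r' (r'' z) z)
    (hr'ne : ∀ z ∈ ball (0 : ℂ) 1, r' z ≠ 0)
    (hre : ∀ z ∈ ball (0 : ℂ) 1, (z * r'' z / r' z).re > -(((n : ℝ) + 2) / 2))
    (hs'' : ∀ z ∈ ball (0 : ℂ) 1,
      HasDerivAt (fun w => Complex.exp (θ * Complex.I) * w ^ n * r' w) (s'' z) z) :
    ∀ z ∈ ball (0 : ℂ) 1,
      ‖(2 * b * (Complex.exp (θ * Complex.I) * z ^ n * r' z)
          + (1 + b) * z * s'' z) /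
        (2 * r' z + (1 + b) * z * r'' z)‖ ≤ ‖z‖ ^ n ∧
      ‖z‖ ^ n < 1 := by
  obtain ⟨m, rfl⟩ : ∃ m, n = m + 1 := ⟨n - 1, by omega⟩
  intro z hz
  have hz1 : ‖z‖ < 1 := by simpa [Complex.dist_eq] using hz
  have hzn : ‖z‖ ^ (m+1) < 1 :=
    pow_lt_one₀ (norm_nonneg z) hz1 (by omega)
  refine ⟨?_, hzn⟩
  set e := Complex.exp (↑θ * Complex.I) with he
  have hR := hr'ne z hz
  -- compute s'' z
  have hD : HasDerivAt (fun w => e * w ^ (m+1) * r' w)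
      (e * (↑(m+1) * z ^ m) * r' z + e * z ^ (m+1) * r'' z) z :=
    ((hasDerivAt_pow (m+1) z).const_mul e).mul (hr'' z hz)
  have hs : s'' z = e * (↑(m+1) * z ^ m) * r' z + e * z ^ (m+1) * r'' z :=
    (hs'' z hz).unique hD
  -- setup real constants
  obtain ⟨c, hc⟩ : ∃ c : ℝ, c = 1 + b := ⟨_, rfl⟩
  obtain ⟨A, hA⟩ : ∃ A : ℝ, A = 2*b + ((m:ℝ)+1)*(1+b) := ⟨_, rfl⟩
  have hcpos : 0 < c := by rw [hc]; linarith
  have hAle : A ≤ 2 := by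
    have h3 : (0:ℝ) < (m:ℝ) + 1 + 2 := by positivity
    have h2 : b ≤ -(((m:ℝ) + 1 - 2) / ((m:ℝ) + 1 + 2)) := by push_cast at hb₂; linarith
    rw [← neg_div, le_div_iff₀ h3] at h2
    rw [hA]; nlinarith [h2]
  have hAc : A + 2 = ((m:ℝ) + 3) * c := by rw [hA, hc]; ring
  obtain ⟨u, hu⟩ : ∃ u : ℂ, u = z * r'' z / r' z := ⟨_, rfl⟩
  have hzr : z * r'' z = u * r' z := by rw [hu, div_mul_cancel₀ _ hR]
  have hure : u.re > -(((m:ℝ)+3)/2) := by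
    have := hre z hz
    push_cast at this
    rw [← hu] at this
    linarith
  -- key inequality
  have hkey : ‖(A:ℂ) + c*u‖ ≤ ‖(2:ℂ) + c*u‖ := by
    apply key_ineq
    have h6 : (2 - A) * (A + 2) = (2 - A) * (((m:ℝ)+3)*c) := by rw [hAc]
    have hxsum : (0:ℝ) ≤ c*u.re + c*(((m:ℝ)+3)/2) := by
      nlinarith [mul_lt_mul_of_pos_left hure hcpos]
    nlinarith [h6, mul_nonneg (by linarith : (0:ℝ) ≤ 2 - A) hxsum]
  -- rewrite numerator and denominator
  have hnum : 2 * (b:ℂ) * (e * z ^ (m+1) * r' z) + (1 + (b:ℂ)) * z * s'' z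
      = e * z ^ (m+1) * (((A:ℂ) + (c:ℂ)*u) * r' z) := by
    rw [hs]
    have : ((A:ℂ) + (c:ℂ)*u) * r' z = (A:ℂ) * r' z + (c:ℂ) * (z * r'' z) := by
      rw [hzr]; ring
    rw [this, hA, hc]
    push_cast
    ring
  have hden : 2 * r' z + (1 + (b:ℂ)) * z * r'' z = ((2:ℂ) + (c:ℂ)*u) * r' z := by
    have : ((2:ℂ) + (c:ℂ)*u) * r' z = 2 * r' z + (c:ℂ) * (z * r'' z) := by
      rw [hzr]; ring
    rw [this, hc]
    push_cast
    ring
  rw [hnum, hden, norm_div, norm_mul, norm_mul, norm_mul, norm_mul]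
  have habse : ‖e‖ = 1 := by simp [he, Complex.norm_exp]
  rw [habse, one_mul, norm_pow, mul_div_assoc]
  have h1 : ‖(A:ℂ)+c*u‖ * ‖r' z‖
      / (‖(2:ℂ)+c*u‖ * ‖r' z‖) ≤ 1 := by
    apply div_le_one_of_le₀
    · exact mul_le_mul_of_nonneg_right hkey (norm_nonneg _)
    · positivity
  calc ‖z‖ ^ (m+1) * (‖(A:ℂ)+c*u‖ * ‖r' z‖
      / (‖(2:ℂ)+c*u‖ * ‖r' z‖))
      ≤ ‖z‖ ^ (m+1) * 1 :=
        mul_le_mul_of_nonneg_left h1 (by positivity)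
    _ = ‖z‖ ^ (m+1) := mul_one _
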